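/- If a formula F has a CL5⁻ proof, then F has a CL5⁻ proof containing no application of the empty cirquent axiom, and with no more applications of each of the other rules than the original proof. -/

import Mathlib

namespace CirquentCalc

/-- Formulas: literals (negation applied only to atoms), ∧, ∨. -/
inductive Fml where
  | pos : ℕ → Fml
  | neg : ℕ → Fml
  | and : Fml → Fml → Fml
  | or : Fml → Fml → Fml
deriving DecidableEq

namespace Fml

/-- Negation (pushed to atoms, as ¬ applies only to atoms). -/
def negate : Fml → Fml
  | pos n => neg n
  | neg n => pos n
  | and a b => or a.negate b.negate
  | or a b => and a.negate b.negate

/-- Substitution extended homomorphically. -/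
def subst (σ : ℕ → Fml) : Fml → Fml
  | pos n => σ n
  | neg n => (σ n).negate
  | and a b => and (a.subst σ) (b.subst σ)
  | or a b => or (a.subst σ) (b.subst σ)

/-- Classical evaluation under a truth assignment. -/
def eval (v : ℕ → Bool) : Fml → Bool
  | pos n => v n
  | neg n => !(v n)
  | and a b => a.eval v && b.eval v
  | or a b => a.eval v || b.eval v

/-- Number of positive occurrences of atom `a`. -/
def cPos (a : ℕ) : Fml → ℕ
  | pos n => if n = a then 1 else 0
  | neg _ => 0
  | and f g => f.cPos a + g.cPos a
  | or f g => f.cPos a + g.cPos a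

/-- Number of negative occurrences of atom `a`. -/
def cNeg (a : ℕ) : Fml → ℕ
  | pos _ => 0
  | neg n => if n = a then 1 else 0
  | and f g => f.cNeg a + g.cNeg a
  | or f g => f.cNeg a + g.cNeg a

/-- Total number of positive occurrences of atoms. -/
def posOcc : Fml → ℕ
  | pos _ => 1
  | neg _ => 0
  | and f g => f.posOcc + g.posOcc
  | or f g => f.posOcc + g.posOcc

/-- Length: total number of occurrences of literals and connectives. -/
def len : Fml → ℕ
  | pos _ => 1
  | neg _ => 1
  | and f g => f.len + g.len + 1
  | or f g => f.len + g.len + 1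

/-- Number of occurrences of ∧. -/
def nAnd : Fml → ℕ
  | pos _ => 0
  | neg _ => 0
  | and f g => f.nAnd + g.nAnd + 1
  | or f g => f.nAnd + g.nAnd

/-- Number of occurrences of ∨. -/
def nOr : Fml → ℕ
  | pos _ => 0
  | neg _ => 0
  | and f g => f.nOr + g.nOr
  | or f g => f.nOr + g.nOr + 1

end Fml

def Tautology (A : Fml) : Prop := ∀ v, A.eval v = true

/-- No atom has more than two occurrences. -/
def Binary (A : Fml) : Prop := ∀ a, A.cPos a + A.cNeg a ≤ 2

/-- Whenever an atom occurs twice, one occurrence is positive and one negative. -/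
def Normal (A : Fml) : Prop := ∀ a, A.cPos a ≤ 1 ∧ A.cNeg a ≤ 1

def AtomicLevel (σ : ℕ → Fml) : Prop := ∀ n, ∃ m, σ n = Fml.pos m

/-- `F` is an instance of `B`: σ(B) = F for some substitution σ. -/
def InstanceOf (F B : Fml) : Prop := ∃ σ, B.subst σ = F

/-- `F` is an atomic-level instance of `B`. -/
def AtomicInstanceOf (F B : Fml) : Prop := ∃ σ, AtomicLevel σ ∧ B.subst σ = F

/-- A cirquent: a pool of (occurrences of) formulas, and a list of ogroups,
each an (index-)set of oformulas of the pool. -/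
structure Cirquent where
  pool : List Fml
  groups : List (Finset ℕ)

def emptyCirquent : Cirquent := ⟨[], []⟩

def idCirquent (F : Fml) : Cirquent := ⟨[F.negate, F], [{0, 1}]⟩

/-- The cirquent with pool ⟨F⟩ and one ogroup containing F. -/
def fmlCirquent (F : Fml) : Cirquent := ⟨[F], [{0}]⟩

/-- Index renaming swapping `i` and `i+1`. -/
def swapIdx (i : ℕ) : ℕ → ℕ := fun j => if j = i then i + 1 else if j = i + 1 then i else j

/-- Index renaming when a new oformula is inserted at position `i`. -/
def insShift (i : ℕ) : ℕ → ℕ := fun j => if j < i then j else j + 1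

/-- Index renaming when the oformulas at positions `i`, `i+1` are merged into one at `i`. -/
def mergeIdx (i : ℕ) : ℕ → ℕ := fun j => if j ≤ i then j else j - 1

/-- Mix: placing the two premise cirquents side by side. -/
def MixStep (A B C : Cirquent) : Prop :=
  C.pool = A.pool ++ B.pool ∧
  C.groups = A.groups ++ B.groups.map (Finset.image (· + A.pool.length))

/-- Oformula exchange: swap two adjacent oformulas, preserving containment. -/
def OfExchStep (P C : Cirquent) : Prop :=
  ∃ (l₁ l₂ : List Fml) (F G : Fml),
    P.pool = l₁ ++ F :: G :: l₂ ∧ C.pool = l₁ ++ G :: F :: l₂ ∧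
    C.groups = P.groups.map (Finset.image (swapIdx l₁.length))

/-- Ogroup exchange: swap two adjacent ogroups. -/
def OgExchStep (P C : Cirquent) : Prop :=
  C.pool = P.pool ∧
  ∃ (g₁ g₂ : List (Finset ℕ)) (Γ Δ : Finset ℕ),
    P.groups = g₁ ++ Γ :: Δ :: g₂ ∧ C.groups = g₁ ++ Δ :: Γ :: g₂

/-- Pool weakening: insert a new oformula, contained in no ogroup. -/
def PoolWeakStep (P C : Cirquent) : Prop :=
  ∃ (l₁ l₂ : List Fml) (F : Fml),
    P.pool = l₁ ++ l₂ ∧ C.pool = l₁ ++ F :: l₂ ∧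
    C.groups = P.groups.map (Finset.image (insShift l₁.length))

/-- Ogroup weakening: add a new arc between a pre-existing ogroup and oformula. -/
def OgWeakStep (P C : Cirquent) : Prop :=
  C.pool = P.pool ∧
  ∃ (g₁ g₂ : List (Finset ℕ)) (Γ : Finset ℕ) (j : ℕ),
    j < P.pool.length ∧ j ∉ Γ ∧
    P.groups = g₁ ++ Γ :: g₂ ∧ C.groups = g₁ ++ insert j Γ :: g₂

/-- Downward duplication: replace an ogroup by two adjacent copies of it. -/
def DupDownStep (P C : Cirquent) : Prop :=
  C.pool = P.pool ∧
  ∃ (g₁ g₂ : List (Finset ℕ)) (Γ : Finset ℕ),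
    P.groups = g₁ ++ Γ :: g₂ ∧ C.groups = g₁ ++ Γ :: Γ :: g₂

/-- Upward duplication: the converse of downward duplication. -/
def DupUpStep (P C : Cirquent) : Prop :=
  C.pool = P.pool ∧
  ∃ (g₁ g₂ : List (Finset ℕ)) (Γ : Finset ℕ),
    P.groups = g₁ ++ Γ :: Γ :: g₂ ∧ C.groups = g₁ ++ Γ :: g₂

/-- ∨-introduction: merge two adjacent oformulas F, G into F ∨ G. -/
def OrIntroStep (P C : Cirquent) : Prop :=
  ∃ (l₁ l₂ : List Fml) (F G : Fml),
    P.pool = l₁ ++ F :: G :: l₂ ∧ C.pool = l₁ ++ (Fml.or F G) :: l₂ ∧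
    C.groups = P.groups.map (Finset.image (mergeIdx l₁.length))

/-- The merging of the ogroup list in ∧-introduction: no ogroup contains both `i`
and `i+1`; every ogroup containing `i` is immediately followed by one containing
`i+1` and vice versa; such pairs are merged. -/
inductive AndMerge (i : ℕ) : List (Finset ℕ) → List (Finset ℕ) → Prop where
  | nil : AndMerge i [] []
  | skip {Γ : Finset ℕ} {l l' : List (Finset ℕ)} :
      i ∉ Γ → (i + 1) ∉ Γ → AndMerge i l l' → AndMerge i (Γ :: l) (Γ :: l')
  | merge {Γ Δ : Finset ℕ} {l l' : List (Finset ℕ)} :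
      i ∈ Γ → (i + 1) ∉ Γ → (i + 1) ∈ Δ → i ∉ Δ →
      AndMerge i l l' → AndMerge i (Γ :: Δ :: l) ((Γ ∪ Δ) :: l')

/-- ∧-introduction. -/
def AndIntroStep (P C : Cirquent) : Prop :=
  ∃ (l₁ l₂ : List Fml) (F G : Fml) (merged : List (Finset ℕ)),
    P.pool = l₁ ++ F :: G :: l₂ ∧ C.pool = l₁ ++ (Fml.and F G) :: l₂ ∧
    AndMerge l₁.length P.groups merged ∧
    C.groups = merged.map (Finset.image (mergeIdx l₁.length))

inductive RuleName where
  | emptyAx | idAx | mix | ofExch | ogExch | poolWeak | ogWeak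
  | dupDown | dupUp | orIntro | andIntro
deriving DecidableEq

/-- The unary (one-premise) rules, by name. -/
def unRel : RuleName → Cirquent → Cirquent → Prop
  | .ofExch => OfExchStep
  | .ogExch => OgExchStep
  | .poolWeak => PoolWeakStep
  | .ogWeak => OgWeakStep
  | .dupDown => DupDownStep
  | .dupUp => DupUpStep
  | .orIntro => OrIntroStep
  | .andIntro => AndIntroStep
  | _ => fun _ _ => False

/-- Proof trees: each node is labeled by its cirquent and the rule used. -/
inductive PTree where
  | leaf (C : Cirquent) (r : RuleName)
  | un (C : Cirquent) (r : RuleName) (p : PTree)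
  | bin (C : Cirquent) (r : RuleName) (p q : PTree)

namespace PTree

def concl : PTree → Cirquent
  | leaf C _ => C
  | un C _ _ => C
  | bin C _ _ _ => C

/-- Validity: each node follows from its children by the named rule. -/
def Valid : PTree → Prop
  | leaf C r =>
      (r = .emptyAx ∧ C = emptyCirquent) ∨ (r = .idAx ∧ ∃ F, C = idCirquent F)
  | un C r p => p.Valid ∧ unRel r p.concl C
  | bin C r p q => p.Valid ∧ q.Valid ∧ r = .mix ∧ MixStep p.concl q.concl C

/-- Number of applications of rule `r` in the proof. -/
def count (r : RuleName) : PTree → ℕ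
  | leaf _ r' => if r' = r then 1 else 0
  | un _ r' p => (if r' = r then 1 else 0) + p.count r
  | bin _ r' p q => (if r' = r then 1 else 0) + p.count r + q.count r

/-- The cirquents occurring in the proof. -/
def cirquents : PTree → List Cirquent
  | leaf C _ => [C]
  | un C _ p => C :: p.cirquents
  | bin C _ p q => C :: (p.cirquents ++ q.cirquents)

/-- Total number of rule applications (nodes). -/
def nodes : PTree → ℕ
  | leaf _ _ => 1
  | un _ _ p => p.nodes + 1
  | bin _ _ p q => p.nodes + q.nodes + 1

/-- Number of leaves of the proof tree. -/
def leavesCount : PTree → ℕ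
  | leaf _ _ => 1
  | un _ _ p => p.leavesCount
  | bin _ _ p q => p.leavesCount + q.leavesCount

end PTree

/-- A proof uses no duplication. -/
def DupFree (p : PTree) : Prop :=
  p.count RuleName.dupDown = 0 ∧ p.count RuleName.dupUp = 0

/-- Provability of a cirquent in CL5. -/
def ProvesC (C : Cirquent) : Prop := ∃ p : PTree, p.Valid ∧ p.concl = C

/-- Provability of a formula in CL5. -/
def ProvesCL5 (F : Fml) : Prop := ∃ p : PTree, p.Valid ∧ p.concl = fmlCirquent F

/-- Provability of a formula in CL5⁻ (CL5 without duplication). -/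
def ProvesCL5m (F : Fml) : Prop :=
  ∃ p : PTree, p.Valid ∧ DupFree p ∧ p.concl = fmlCirquent F

/-- Number of arcs of a cirquent (sum of the sizes of its ogroups). -/
def Cirquent.arcs (C : Cirquent) : ℕ := (C.groups.map Finset.card).sum

/-- Size of a cirquent: sum of the lengths of the oformulas in its pool plus
the sum of the sizes of its ogroups. -/
def Cirquent.size (C : Cirquent) : ℕ := (C.pool.map Fml.len).sum + C.arcs

/-- Size of a proof: the sum of the sizes of the cirquents it contains. -/
def PTree.size (p : PTree) : ℕ := (p.cirquents.map Cirquent.size).sum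

/-- Total number of positive occurrences of atoms in the pool. -/
def Cirquent.poolPosOcc (C : Cirquent) : ℕ := (C.pool.map Fml.posOcc).sum

end CirquentCalc

open CirquentCalc

section Aux

open RuleName

private lemma concl_leaf (C : Cirquent) (r : RuleName) : (PTree.leaf C r).concl = C := rfl
private lemma concl_un (C : Cirquent) (r : RuleName) (a : PTree) : (PTree.un C r a).concl = C := rfl
private lemma concl_bin (C : Cirquent) (r : RuleName) (a b : PTree) :
    (PTree.bin C r a b).concl = C := rfl

private lemma count_leaf (C : Cirquent) (r r' : RuleName) :
    (PTree.leaf C r).count r' = (if r = r' then 1 else 0) := rfl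
private lemma count_un (C : Cirquent) (r r' : RuleName) (a : PTree) :
    (PTree.un C r a).count r' = (if r = r' then 1 else 0) + a.count r' := rfl
private lemma count_bin (C : Cirquent) (r r' : RuleName) (a b : PTree) :
    (PTree.bin C r a b).count r' = (if r = r' then 1 else 0) + a.count r' + b.count r' := rfl

lemma cq_ext {C D : Cirquent} (h1 : C.pool = D.pool) (h2 : C.groups = D.groups) : C = D := by
  cases C; cases D; cases h1; cases h2; rfl

lemma andMerge_mem {i : ℕ} {l l' : List (Finset ℕ)} (h : AndMerge i l l') :
    ∀ g' ∈ l', ∀ j ∈ g', ∃ g ∈ l, j ∈ g := by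
  induction h with
  | nil => simp
  | @skip Γ l l' _ _ _ ih =>
    intro g' hg' j hj
    rcases List.mem_cons.mp hg' with rfl | h
    · exact ⟨g', List.mem_cons_self, hj⟩
    · obtain ⟨g, hg, hjg⟩ := ih g' h j hj
      exact ⟨g, List.mem_cons_of_mem _ hg, hjg⟩
  | @merge Γ Δ l l' _ _ _ _ _ ih =>
    intro g' hg' j hj
    rcases List.mem_cons.mp hg' with rfl | h
    · rcases Finset.mem_union.mp hj with h | h
      · exact ⟨Γ, by simp, h⟩
      · exact ⟨Δ, by simp, h⟩
    · obtain ⟨g, hg, hjg⟩ := ih g' h j hj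
      exact ⟨g, by simp [hg], hjg⟩

lemma valid_bounded : ∀ p : PTree, p.Valid →
    ∀ g ∈ p.concl.groups, ∀ j ∈ g, j < p.concl.pool.length := by
  intro p
  induction p with
  | leaf C r =>
    rintro (⟨_, rfl⟩ | ⟨_, F, rfl⟩) g hg j hj
    · simp [emptyCirquent, concl_leaf] at hg
    · simp only [concl_leaf, idCirquent, List.mem_singleton] at hg ⊢
      subst hg
      simp at hj
      simp only [List.length_cons, List.length_nil]
      omega
  | un C r a ih =>
    rintro ⟨hva, hstep⟩ g hg j hj
    have iha := ih hva
    simp only [concl_un] at hg ⊢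
    cases r
    case emptyAx => exact (hstep : False).elim
    case idAx => exact (hstep : False).elim
    case mix => exact (hstep : False).elim
    case ofExch =>
      obtain ⟨l₁, l₂, F, G, hP, hC, hG⟩ := (hstep : OfExchStep a.concl C)
      rw [hG] at hg
      simp only [List.mem_map] at hg
      obtain ⟨g₀, hg₀, rfl⟩ := hg
      simp only [Finset.mem_image] at hj
      obtain ⟨j₀, hj₀, rfl⟩ := hj
      have h1 := iha g₀ hg₀ j₀ hj₀
      rw [hP] at h1
      rw [hC]
      simp only [List.length_append, List.length_cons] at h1 ⊢
      simp only [swapIdx]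
      split_ifs <;> omega
    case ogExch =>
      obtain ⟨hpool, g₁, g₂, Γ, Δ, hPg, hCg⟩ := (hstep : OgExchStep a.concl C)
      rw [hpool]
      refine iha g ?_ j hj
      rw [hPg]
      rw [hCg] at hg
      simp only [List.mem_append, List.mem_cons] at hg ⊢
      tauto
    case poolWeak =>
      obtain ⟨l₁, l₂, F, hP, hC, hG⟩ := (hstep : PoolWeakStep a.concl C)
      rw [hG] at hg
      simp only [List.mem_map] at hg
      obtain ⟨g₀, hg₀, rfl⟩ := hg
      simp only [Finset.mem_image] at hj
      obtain ⟨j₀, hj₀, rfl⟩ := hj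
      have h1 := iha g₀ hg₀ j₀ hj₀
      rw [hP] at h1
      rw [hC]
      simp only [List.length_append, List.length_cons] at h1 ⊢
      simp only [insShift]
      split_ifs <;> omega
    case ogWeak =>
      obtain ⟨hpool, g₁, g₂, Γ, jj, hjlt, hjni, hPg, hCg⟩ := (hstep : OgWeakStep a.concl C)
      rw [hpool]
      rw [hCg] at hg
      rcases List.mem_append.mp hg with h | h
      · exact iha g (by rw [hPg]; exact List.mem_append.mpr (Or.inl h)) j hj
      · rcases List.mem_cons.mp h with rfl | h
        · rcases Finset.mem_insert.mp hj with rfl | hjΓ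
          · exact hjlt
          · exact iha Γ (by rw [hPg]; simp) j hjΓ
        · exact iha g (by rw [hPg]; simp [h]) j hj
    case dupDown =>
      obtain ⟨hpool, g₁, g₂, Γ, hPg, hCg⟩ := (hstep : DupDownStep a.concl C)
      rw [hpool]
      refine iha g ?_ j hj
      rw [hPg]
      rw [hCg] at hg
      simp only [List.mem_append, List.mem_cons] at hg ⊢
      tauto
    case dupUp =>
      obtain ⟨hpool, g₁, g₂, Γ, hPg, hCg⟩ := (hstep : DupUpStep a.concl C)
      rw [hpool]
      refine iha g ?_ j hj
      rw [hPg]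
      rw [hCg] at hg
      simp only [List.mem_append, List.mem_cons] at hg ⊢
      tauto
    case orIntro =>
      obtain ⟨l₁, l₂, F, G, hP, hC, hG⟩ := (hstep : OrIntroStep a.concl C)
      rw [hG] at hg
      simp only [List.mem_map] at hg
      obtain ⟨g₀, hg₀, rfl⟩ := hg
      simp only [Finset.mem_image] at hj
      obtain ⟨j₀, hj₀, rfl⟩ := hj
      have h1 := iha g₀ hg₀ j₀ hj₀
      rw [hP] at h1
      rw [hC]
      simp only [List.length_append, List.length_cons] at h1 ⊢
      simp only [mergeIdx]
      split_ifs <;> omega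
    case andIntro =>
      obtain ⟨l₁, l₂, F, G, merged, hP, hC, hM, hG⟩ := (hstep : AndIntroStep a.concl C)
      rw [hG] at hg
      simp only [List.mem_map] at hg
      obtain ⟨g₀, hg₀, rfl⟩ := hg
      simp only [Finset.mem_image] at hj
      obtain ⟨j₀, hj₀, rfl⟩ := hj
      obtain ⟨gP, hgP, hjP⟩ := andMerge_mem hM g₀ hg₀ j₀ hj₀
      have h1 := iha gP hgP j₀ hjP
      rw [hP] at h1
      rw [hC]
      simp only [List.length_append, List.length_cons] at h1 ⊢
      simp only [mergeIdx]
      split_ifs <;> omega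
  | bin C r a b iha ihb =>
    rintro ⟨hva, hvb, rfl, hpool, hgroups⟩ g hg j hj
    simp only [concl_bin] at hg ⊢
    rw [hgroups] at hg
    rw [hpool, List.length_append]
    rcases List.mem_append.mp hg with h | h
    · exact lt_of_lt_of_le (iha hva g h j hj) (Nat.le_add_right _ _)
    · simp only [List.mem_map] at h
      obtain ⟨g₀, hg₀, rfl⟩ := h
      simp only [Finset.mem_image] at hj
      obtain ⟨j₀, hj₀, rfl⟩ := hj
      have := ihb hvb g₀ hg₀ j₀ hj₀
      omega

lemma weakEnd : ∀ (L : List Fml) (q : PTree), q.Valid →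
    (∀ g ∈ q.concl.groups, ∀ j ∈ g, j < q.concl.pool.length) →
    ∃ q' : PTree, q'.Valid ∧
      q'.concl.pool = q.concl.pool ++ L ∧ q'.concl.groups = q.concl.groups ∧
      ∀ r, q'.count r ≤ q.count r + (if r = RuleName.poolWeak then L.length else 0) := by
  intro L
  induction L with
  | nil =>
    intro q hv _
    exact ⟨q, hv, by simp, rfl, fun r => by simp⟩
  | cons x L' ih =>
    intro q hv hb
    have hmap : q.concl.groups.map (Finset.image (insShift q.concl.pool.length))
        = q.concl.groups := by
      have h1 : ∀ g ∈ q.concl.groups,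
          Finset.image (insShift q.concl.pool.length) g = g := by
        intro g hg
        have h2 : Finset.image (insShift q.concl.pool.length) g = Finset.image id g :=
          Finset.image_congr (fun j hj => by
            simp only [insShift, id]
            exact if_pos (hb g hg j hj))
        rw [h2, Finset.image_id]
      calc q.concl.groups.map (Finset.image (insShift q.concl.pool.length))
          = q.concl.groups.map id := List.map_congr_left h1
        _ = q.concl.groups := List.map_id _
    have hv₁ : (PTree.un ⟨q.concl.pool ++ [x], q.concl.groups⟩ RuleName.poolWeak q).Valid := by
      refine ⟨hv, ?_⟩
      show PoolWeakStep q.concl ⟨q.concl.pool ++ [x], q.concl.groups⟩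
      exact ⟨q.concl.pool, [], x, by simp, rfl, hmap.symm⟩
    have hb₁ : ∀ g ∈ (PTree.un ⟨q.concl.pool ++ [x], q.concl.groups⟩
        RuleName.poolWeak q).concl.groups, ∀ j ∈ g,
        j < (PTree.un ⟨q.concl.pool ++ [x], q.concl.groups⟩
          RuleName.poolWeak q).concl.pool.length := by
      simp only [concl_un]
      intro g hg j hj
      have := hb g hg j hj
      simp only [List.length_append, List.length_singleton]
      omega
    obtain ⟨q', hq'v, hq'p, hq'g, hq'cnt⟩ := ih _ hv₁ hb₁
    refine ⟨q', hq'v, ?_, ?_, ?_⟩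
    · rw [hq'p]; simp [concl_un]
    · rw [hq'g, concl_un]
    · intro r
      have h1 := hq'cnt r
      simp only [count_un] at h1
      by_cases h : r = RuleName.poolWeak
      · subst h; simp at h1 ⊢; omega
      · simp [h, Ne.symm h] at h1 ⊢; omega

lemma weakFront : ∀ (L : List Fml) (q : PTree), q.Valid →
    ∃ q' : PTree, q'.Valid ∧ q'.concl.pool = L ++ q.concl.pool ∧
      q'.concl.groups = q.concl.groups.map (Finset.image (· + L.length)) ∧
      ∀ r, q'.count r ≤ q.count r + (if r = RuleName.poolWeak then L.length else 0) := by
  intro L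
  induction L with
  | nil =>
    intro q hv
    refine ⟨q, hv, by simp, ?_, fun r => by simp⟩
    have h0 : q.concl.groups.map (Finset.image (· + (0:ℕ))) = q.concl.groups := by
      have h1 : ∀ g ∈ q.concl.groups, Finset.image (· + (0:ℕ)) g = g := by
        intro g _
        simpa using Finset.image_id (s := g)
      calc q.concl.groups.map (Finset.image (· + (0:ℕ)))
          = q.concl.groups.map id := List.map_congr_left h1
        _ = q.concl.groups := List.map_id _
    simpa using h0.symm
  | cons x L' ih =>
    intro q hv
    obtain ⟨q₁, hv₁, hp₁, hg₁, hcnt₁⟩ := ih q hv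
    have hcomp : ∀ g : Finset ℕ,
        Finset.image (insShift 0) (Finset.image (· + L'.length) g)
          = Finset.image (· + (L'.length + 1)) g := by
      intro g
      rw [Finset.image_image]
      apply Finset.image_congr
      intro j _
      simp only [Function.comp_apply, insShift]
      split_ifs with h
      · omega
      · omega
    have hstep : PoolWeakStep q₁.concl ⟨x :: (L' ++ q.concl.pool),
        q.concl.groups.map (Finset.image (· + (L'.length + 1)))⟩ := by
      refine ⟨[], L' ++ q.concl.pool, x, by simpa using hp₁, rfl, ?_⟩
      rw [hg₁, List.map_map]
      apply List.map_congr_left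
      intro g _
      exact (hcomp g).symm
    refine ⟨PTree.un ⟨x :: (L' ++ q.concl.pool),
        q.concl.groups.map (Finset.image (· + (L'.length + 1)))⟩ RuleName.poolWeak q₁,
        ⟨hv₁, hstep⟩, ?_, ?_, ?_⟩
    · simp [concl_un]
    · simp only [concl_un, List.length_cons]
    · intro r
      have h1 := hcnt₁ r
      simp only [count_un]
      by_cases h : r = RuleName.poolWeak
      · subst h; simp at h1 ⊢; omega
      · simp [h, Ne.symm h] at h1 ⊢; omega

lemma clean : ∀ p : PTree, p.Valid →
    (∃ q : PTree, q.Valid ∧ q.concl = p.concl ∧ q.count RuleName.emptyAx = 0 ∧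
      ∀ r, r ≠ RuleName.emptyAx → q.count r ≤ p.count r) ∨
    (p.concl.groups = [] ∧ p.concl.pool.length ≤ p.count RuleName.poolWeak) := by
  intro p
  induction p with
  | leaf C r =>
    rintro (⟨rfl, rfl⟩ | ⟨rfl, F, rfl⟩)
    · right
      simp [concl_leaf, emptyCirquent, count_leaf]
    · left
      exact ⟨PTree.leaf (idCirquent F) RuleName.idAx, Or.inr ⟨rfl, F, rfl⟩, rfl,
        by simp [count_leaf], fun r hr => le_refl _⟩
  | un C r a ih =>
    rintro ⟨hva, hstep⟩
    rcases ih hva with ⟨q, hqv, hqc, hqe, hqcnt⟩ | ⟨hg0, hlen⟩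
    · left
      have hre : r ≠ RuleName.emptyAx := by
        rintro rfl; exact (hstep : False)
      refine ⟨PTree.un C r q, ⟨hqv, by rwa [hqc]⟩, rfl, ?_, ?_⟩
      · simp [count_un, hqe, hre]
      · intro r' hr'
        simp only [count_un]
        exact Nat.add_le_add_left (hqcnt r' hr') _
    · cases r
      case emptyAx => exact (hstep : False).elim
      case idAx => exact (hstep : False).elim
      case mix => exact (hstep : False).elim
      case ofExch =>
        obtain ⟨l₁, l₂, F, G, hP, hC, hG⟩ := (hstep : OfExchStep a.concl C)
        right
        constructor
        · simp only [concl_un]; rw [hG, hg0]; rfl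
        · have h1 := hlen
          rw [hP] at h1
          simp only [concl_un, count_un, hC, List.length_append, List.length_cons] at h1 ⊢
          simp only [show (RuleName.ofExch = RuleName.poolWeak) = False by simp, if_false]
          omega
      case ogExch =>
        obtain ⟨hpool, g₁, g₂, Γ, Δ, hPg, hCg⟩ := (hstep : OgExchStep a.concl C)
        rw [hg0] at hPg
        have := congrArg List.length hPg
        simp at this
      case poolWeak =>
        obtain ⟨l₁, l₂, F, hP, hC, hG⟩ := (hstep : PoolWeakStep a.concl C)
        right
        constructor
        · simp only [concl_un]; rw [hG, hg0]; rfl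
        · have h1 := hlen
          rw [hP] at h1
          simp only [concl_un, count_un, hC, List.length_append, List.length_cons] at h1 ⊢
          simp only [show (RuleName.poolWeak = RuleName.poolWeak) = True by simp, if_true]
          omega
      case ogWeak =>
        obtain ⟨hpool, g₁, g₂, Γ, jj, hjlt, hjni, hPg, hCg⟩ := (hstep : OgWeakStep a.concl C)
        rw [hg0] at hPg
        have := congrArg List.length hPg
        simp at this
      case dupDown =>
        obtain ⟨hpool, g₁, g₂, Γ, hPg, hCg⟩ := (hstep : DupDownStep a.concl C)
        rw [hg0] at hPg
        have := congrArg List.length hPg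
        simp at this
      case dupUp =>
        obtain ⟨hpool, g₁, g₂, Γ, hPg, hCg⟩ := (hstep : DupUpStep a.concl C)
        rw [hg0] at hPg
        have := congrArg List.length hPg
        simp at this
      case orIntro =>
        obtain ⟨l₁, l₂, F, G, hP, hC, hG⟩ := (hstep : OrIntroStep a.concl C)
        right
        constructor
        · simp only [concl_un]; rw [hG, hg0]; rfl
        · have h1 := hlen
          rw [hP] at h1
          simp only [concl_un, count_un, hC, List.length_append, List.length_cons] at h1 ⊢
          simp only [show (RuleName.orIntro = RuleName.poolWeak) = False by simp, if_false]
          omega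
      case andIntro =>
        obtain ⟨l₁, l₂, F, G, merged, hP, hC, hM, hG⟩ := (hstep : AndIntroStep a.concl C)
        rw [hg0] at hM
        have hmerged : merged = [] := by cases hM; rfl
        right
        constructor
        · simp only [concl_un]; rw [hG, hmerged]; rfl
        · have h1 := hlen
          rw [hP] at h1
          simp only [concl_un, count_un, hC, List.length_append, List.length_cons] at h1 ⊢
          simp only [show (RuleName.andIntro = RuleName.poolWeak) = False by simp, if_false]
          omega
  | bin C r a b iha ihb =>
    rintro ⟨hva, hvb, rfl, hpool, hgroups⟩
    rcases iha hva with ⟨qa, hqav, hqac, hqae, hqacnt⟩ | ⟨hga, hla⟩ <;>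
      rcases ihb hvb with ⟨qb, hqbv, hqbc, hqbe, hqbcnt⟩ | ⟨hgb, hlb⟩
    · -- both good
      left
      refine ⟨PTree.bin C RuleName.mix qa qb,
        ⟨hqav, hqbv, rfl, by rw [hqac, hqbc]; exact ⟨hpool, hgroups⟩⟩, rfl, ?_, ?_⟩
      · simp [count_bin, hqae, hqbe]
      · intro r hr
        simp only [count_bin]
        have := hqacnt r hr
        have := hqbcnt r hr
        omega
    · -- a good, b bad
      left
      obtain ⟨q', hq'v, hq'p, hq'g, hq'cnt⟩ := weakEnd b.concl.pool qa hqav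
        (by rw [hqac]; exact valid_bounded a hva)
      have hc : q'.concl = C := by
        refine cq_ext ?_ ?_
        · rw [hq'p, hqac, hpool]
        · rw [hq'g, hqac, hgroups, hgb]; simp
      refine ⟨q', hq'v, by rw [concl_bin]; exact hc, ?_, ?_⟩
      · have h1 := hq'cnt RuleName.emptyAx
        simp [hqae] at h1
        omega
      · intro r hr
        have h1 := hq'cnt r
        have h2 := hqacnt r hr
        simp only [count_bin]
        by_cases hrp : r = RuleName.poolWeak
        · subst hrp
          simp at h1
          omega
        · simp [hrp] at h1
          omega
    · -- a bad, b good
      left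
      obtain ⟨q', hq'v, hq'p, hq'g, hq'cnt⟩ := weakFront a.concl.pool qb hqbv
      have hc : q'.concl = C := by
        refine cq_ext ?_ ?_
        · rw [hq'p, hqbc, hpool]
        · rw [hq'g, hqbc, hgroups, hga]; simp
      refine ⟨q', hq'v, by rw [concl_bin]; exact hc, ?_, ?_⟩
      · have h1 := hq'cnt RuleName.emptyAx
        simp [hqbe] at h1
        omega
      · intro r hr
        have h1 := hq'cnt r
        have h2 := hqbcnt r hr
        simp only [count_bin]
        by_cases hrp : r = RuleName.poolWeak
        · subst hrp
          simp at h1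
          omega
        · simp [hrp] at h1
          omega
    · -- both bad
      right
      constructor
      · rw [concl_bin, hgroups, hga, hgb]
        simp
      · rw [concl_bin, hpool, List.length_append]
        simp only [count_bin]
        omega

end Aux


/-- If F has a CL5⁻ proof, then F has a CL5⁻ proof with no
application of the empty cirquent axiom and no more applications of each other
rule than the original proof. -/
theorem cl5m_remove_empty_axiom (F : Fml) (p : PTree)
    (hv : p.Valid) (hd : DupFree p) (hc : p.concl = fmlCirquent F) :
    ∃ q : PTree, q.Valid ∧ DupFree q ∧ q.concl = fmlCirquent F ∧
      q.count RuleName.emptyAx = 0 ∧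
      ∀ r : RuleName, r ≠ RuleName.emptyAx → q.count r ≤ p.count r := by
  rcases clean p hv with ⟨q, hqv, hqc, hqe, hqcnt⟩ | ⟨hg, _⟩
  · refine ⟨q, hqv, ?_, hqc.trans hc, hqe, hqcnt⟩
    obtain ⟨hd1, hd2⟩ := hd
    constructor
    · have h1 := hqcnt RuleName.dupDown (by decide)
      omega
    · have h1 := hqcnt RuleName.dupUp (by decide)
      omega
  · rw [hc] at hg
    simp [fmlCirquent] at hg
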